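/- The strong descent set D_−(π) uniquely determines the permutation π: if two permutations π, σ ∈ S_n have D_−(π) = D_−(σ), then π = σ. -/

import Mathlib

open Equiv Finset

/-- Number of inversions (Coxeter length) of a permutation of `Fin n`. -/
def invNum {n : ℕ} (π : Equiv.Perm (Fin n)) : ℕ :=
  (Finset.univ.filter (fun p : Fin n × Fin n => p.1 < p.2 ∧ π p.2 < π p.1)).card

/-- Down degree: number of transpositions `t_{a,b}` with `ℓ(t_{a,b} π) = ℓ(π) - 1`. -/
def downDeg {n : ℕ} (π : Equiv.Perm (Fin n)) : ℕ :=
  (Finset.univ.filter (fun p : Fin n × Fin n =>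
    p.1 < p.2 ∧ invNum (Equiv.swap p.1 p.2 * π) + 1 = invNum π)).card

/-- Total degree: number of transpositions `t_{a,b}` with `ℓ(t_{a,b} π) = ℓ(π) ± 1`. -/
def totalDeg {n : ℕ} (π : Equiv.Perm (Fin n)) : ℕ :=
  (Finset.univ.filter (fun p : Fin n × Fin n =>
    p.1 < p.2 ∧ (invNum (Equiv.swap p.1 p.2 * π) + 1 = invNum π ∨
      invNum (Equiv.swap p.1 p.2 * π) = invNum π + 1))).card


lemma reverse_iff {n : ℕ} {a b : Fin n} (hab : a < b) {x y : Fin n} (hxy : x < y) :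
    Equiv.swap a b y < Equiv.swap a b x ↔
      ((x = a ∧ y = b) ∨ (x = a ∧ a < y ∧ y < b) ∨ (y = b ∧ a < x ∧ x < b)) := by
  simp only [Equiv.swap_apply_def]
  split_ifs <;>
    simp only [Fin.ext_iff, Fin.lt_def] at * <;> omega

/-- inversion count in terms of value pairs -/
def J {n : ℕ} (f : Equiv.Perm (Fin n)) : ℕ :=
  (Finset.univ.filter fun p : Fin n × Fin n => p.1 < p.2 ∧ f p.2 < f p.1).card

lemma key {n : ℕ} (f : Equiv.Perm (Fin n)) {a b : Fin n} (hab : a < b) (hba : f b < f a) :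
    J (f * Equiv.swap a b) +
      2 * (Finset.univ.filter fun c => a < c ∧ c < b ∧ f b < f c ∧ f c < f a).card + 1 = J f := by
  set s := Equiv.swap a b with hs
  set A : Finset (Fin n × Fin n) := univ.filter fun p => p.1 < p.2 ∧ f p.2 < f p.1 with hA
  set B : Finset (Fin n × Fin n) := univ.filter fun p => s p.1 < s p.2 ∧ f p.2 < f p.1 with hB
  have hJB : J (f * s) = B.card := by
    apply card_nbij' (fun p => (s p.1, s p.2)) (fun p => (s p.1, s p.2))
    · intro p hp
      change p ∈ (univ.filter fun p : Fin n × Fin n => p.1 < p.2 ∧ (f * s) p.2 < (f * s) p.1) at hp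
      rw [Finset.mem_filter] at hp
      simp only [mem_coe, mem_filter, mem_univ, true_and, Perm.mul_apply] at hp
      simp only [hB, mem_coe, mem_filter, mem_univ, true_and, swap_apply_self, hs]
      exact ⟨hp.1, hp.2⟩
    · intro p hp
      simp only [hB, mem_coe, mem_filter, mem_univ, true_and] at hp
      simp only [mem_coe, mem_filter, mem_univ, true_and, Perm.mul_apply, swap_apply_self, hs]
      exact ⟨hp.1, hp.2⟩
    · intro p _; simp [hs, Prod.ext_iff]
    · intro p _; simp [hs, Prod.ext_iff]
  have hJA : J f = A.card := rfl
  -- simplified membership in A \ B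
  have memAB : ∀ p : Fin n × Fin n,
      p ∈ A \ B ↔ p.1 < p.2 ∧ f p.2 < f p.1 ∧ s p.2 < s p.1 := by
    intro p
    simp only [mem_sdiff, hA, hB, mem_filter, mem_univ, true_and]
    constructor
    · rintro ⟨⟨h1, h2⟩, hnB⟩
      have hne : s p.1 ≠ s p.2 := fun hh => (ne_of_lt h1) (s.injective hh)
      have : ¬ (s p.1 < s p.2) := fun hh => hnB ⟨hh, h2⟩
      exact ⟨h1, h2, lt_of_le_of_ne (not_lt.mp this) hne.symm⟩
    · rintro ⟨h1, h2, h3⟩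
      exact ⟨⟨h1, h2⟩, fun hh => absurd h3 (not_lt.mpr (le_of_lt hh.1))⟩
  have memBA : ∀ p : Fin n × Fin n,
      p ∈ B \ A ↔ s p.1 < s p.2 ∧ f p.2 < f p.1 ∧ p.2 < p.1 := by
    intro p
    simp only [mem_sdiff, hA, hB, mem_filter, mem_univ, true_and]
    constructor
    · rintro ⟨⟨h1, h2⟩, hnA⟩
      have hne : p.1 ≠ p.2 := fun hh => (ne_of_lt h1) (by rw [hh])
      have : ¬ (p.1 < p.2) := fun hh => hnA ⟨hh, h2⟩
      exact ⟨h1, h2, lt_of_le_of_ne (not_lt.mp this) hne.symm⟩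
    · rintro ⟨h1, h2, h3⟩
      exact ⟨⟨h1, h2⟩, fun hh => absurd h3 (not_lt.mpr (le_of_lt hh.1))⟩
  -- explicit description of A \ B
  have hADB : A \ B = insert ((a, b) : Fin n × Fin n)
      (((univ.filter fun c => a < c ∧ c < b ∧ f c < f a).image fun c => (a, c)) ∪
       ((univ.filter fun c => a < c ∧ c < b ∧ f b < f c).image fun c => (c, b))) := by
    ext p
    rw [memAB]
    simp only [mem_insert, mem_union, mem_image, mem_filter, mem_univ, true_and]
    constructor
    · rintro ⟨h1, h2, h3⟩
      rcases (reverse_iff hab h1).mp h3 with ⟨hx, hy⟩ | ⟨hx, hy1, hy2⟩ | ⟨hy, hx1, hx2⟩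
      · left; exact Prod.ext hx hy
      · right; left; exact ⟨p.2, ⟨hy1, hy2, by rw [← hx]; exact h2⟩, by rw [← hx]⟩
      · right; right; exact ⟨p.1, ⟨hx1, hx2, by rw [← hy]; exact h2⟩, by rw [← hy]⟩
    · rintro (rfl | ⟨c, ⟨hc1, hc2, hc3⟩, rfl⟩ | ⟨c, ⟨hc1, hc2, hc3⟩, rfl⟩)
      · exact ⟨hab, hba, (reverse_iff hab hab).mpr (Or.inl ⟨rfl, rfl⟩)⟩
      · exact ⟨hc1, hc3, (reverse_iff hab hc1).mpr (Or.inr (Or.inl ⟨rfl, hc1, hc2⟩))⟩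
      · exact ⟨hc2, hc3, (reverse_iff hab hc2).mpr (Or.inr (Or.inr ⟨rfl, hc1, hc2⟩))⟩
  -- explicit description of B \ A
  have hBDA : B \ A =
      (((univ.filter fun c => a < c ∧ c < b ∧ f a < f c).image fun c => (c, a)) ∪
       ((univ.filter fun c => a < c ∧ c < b ∧ f c < f b).image fun c => (b, c))) := by
    ext p
    rw [memBA]
    simp only [mem_union, mem_image, mem_filter, mem_univ, true_and]
    constructor
    · rintro ⟨h1, h2, h3⟩
      rcases (reverse_iff hab h3).mp h1 with ⟨hx, hy⟩ | ⟨hx, hy1, hy2⟩ | ⟨hy, hx1, hx2⟩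
      · rw [hx, hy] at h2; exact absurd h2 (asymm hba)
      · left; exact ⟨p.1, ⟨hy1, hy2, by rw [← hx]; exact h2⟩, Prod.ext rfl hx.symm⟩
      · right; exact ⟨p.2, ⟨hx1, hx2, by rw [← hy]; exact h2⟩, Prod.ext hy.symm rfl⟩
    · rintro (⟨c, ⟨hc1, hc2, hc3⟩, rfl⟩ | ⟨c, ⟨hc1, hc2, hc3⟩, rfl⟩)
      · exact ⟨(reverse_iff hab hc1).mpr (Or.inr (Or.inl ⟨rfl, hc1, hc2⟩)), hc3, hc1⟩
      · exact ⟨(reverse_iff hab hc2).mpr (Or.inr (Or.inr ⟨rfl, hc1, hc2⟩)), hc3, hc2⟩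
  -- cardinalities
  have hinj1 : Function.Injective (fun c : Fin n => ((a, c) : Fin n × Fin n)) := by
    intro x y hxy; simpa [Prod.ext_iff] using hxy
  have hinj2 : Function.Injective (fun c : Fin n => ((c, b) : Fin n × Fin n)) := by
    intro x y hxy; simpa [Prod.ext_iff] using hxy
  have hinj3 : Function.Injective (fun c : Fin n => ((c, a) : Fin n × Fin n)) := by
    intro x y hxy; simpa [Prod.ext_iff] using hxy
  have hinj4 : Function.Injective (fun c : Fin n => ((b, c) : Fin n × Fin n)) := by
    intro x y hxy; simpa [Prod.ext_iff] using hxy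
  have cADB : (A \ B).card =
      1 + (univ.filter fun c => a < c ∧ c < b ∧ f c < f a).card
        + (univ.filter fun c => a < c ∧ c < b ∧ f b < f c).card := by
    rw [hADB]
    rw [card_insert_of_notMem, card_union_of_disjoint, card_image_of_injective _ hinj1,
      card_image_of_injective _ hinj2]
    · ring
    · rw [disjoint_left]
      rintro p hp1 hp2
      simp only [mem_image, mem_filter, mem_univ, true_and] at hp1 hp2
      obtain ⟨c, ⟨hc1, _, _⟩, rfl⟩ := hp1
      obtain ⟨c', ⟨hc1', _, _⟩, he⟩ := hp2
      simp only [Prod.mk.injEq] at he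
      exact absurd he.1 (ne_of_lt hc1').symm
    · simp only [mem_union, mem_image, mem_filter, mem_univ, true_and, not_or]
      constructor
      · rintro ⟨c, ⟨_, hc2, _⟩, he⟩
        simp only [Prod.mk.injEq] at he
        exact absurd he.2 (ne_of_lt hc2)
      · rintro ⟨c, ⟨hc1, _, _⟩, he⟩
        simp only [Prod.mk.injEq] at he
        exact absurd he.1 (ne_of_lt hc1).symm
  have cBDA : (B \ A).card =
      (univ.filter fun c => a < c ∧ c < b ∧ f a < f c).card
        + (univ.filter fun c => a < c ∧ c < b ∧ f c < f b).card := by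
    rw [hBDA, card_union_of_disjoint, card_image_of_injective _ hinj3,
      card_image_of_injective _ hinj4]
    rw [disjoint_left]
    rintro p hp1 hp2
    simp only [mem_image, mem_filter, mem_univ, true_and] at hp1 hp2
    obtain ⟨c, ⟨_, hc2, _⟩, rfl⟩ := hp1
    obtain ⟨c', ⟨_, hc2', _⟩, he⟩ := hp2
    simp only [Prod.mk.injEq] at he
    exact absurd he.1 (ne_of_lt hc2).symm
  -- partition identities
  have part1 : (univ.filter fun c => a < c ∧ c < b ∧ f c < f a).card =
      (univ.filter fun c => a < c ∧ c < b ∧ f c < f b).card +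
      (univ.filter fun c => a < c ∧ c < b ∧ f b < f c ∧ f c < f a).card := by
    rw [← card_union_of_disjoint, ← filter_or]
    · apply congrArg
      apply filter_congr
      intro c _
      constructor
      · rintro ⟨h1, h2, h3⟩
        rcases lt_trichotomy (f c) (f b) with hh | hh | hh
        · exact Or.inl ⟨h1, h2, hh⟩
        · exact absurd (f.injective hh) (ne_of_lt h2)
        · exact Or.inr ⟨h1, h2, hh, h3⟩
      · rintro (⟨h1, h2, h3⟩ | ⟨h1, h2, _, h4⟩)
        · exact ⟨h1, h2, lt_trans h3 hba⟩
        · exact ⟨h1, h2, h4⟩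
    · rw [disjoint_left]
      intro c hc1 hc2
      simp only [mem_filter, mem_univ, true_and] at hc1 hc2
      exact absurd hc1.2.2 (asymm hc2.2.2.1)
  have part2 : (univ.filter fun c => a < c ∧ c < b ∧ f b < f c).card =
      (univ.filter fun c => a < c ∧ c < b ∧ f a < f c).card +
      (univ.filter fun c => a < c ∧ c < b ∧ f b < f c ∧ f c < f a).card := by
    rw [← card_union_of_disjoint, ← filter_or]
    · apply congrArg
      apply filter_congr
      intro c _
      constructor
      · rintro ⟨h1, h2, h3⟩
        rcases lt_trichotomy (f c) (f a) with hh | hh | hh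
        · exact Or.inr ⟨h1, h2, h3, hh⟩
        · exact absurd (f.injective hh) (ne_of_gt h1)
        · exact Or.inl ⟨h1, h2, hh⟩
      · rintro (⟨h1, h2, h3⟩ | ⟨h1, h2, h3, _⟩)
        · exact ⟨h1, h2, lt_trans hba h3⟩
        · exact ⟨h1, h2, h3⟩
    · rw [disjoint_left]
      intro c hc1 hc2
      simp only [mem_filter, mem_univ, true_and] at hc1 hc2
      exact absurd hc1.2.2 (asymm hc2.2.2.2)
  have hAsplit := Finset.card_inter_add_card_sdiff A B
  have hBsplit := Finset.card_inter_add_card_sdiff B A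
  rw [Finset.inter_comm] at hBsplit
  rw [hJB, hJA]
  omega

lemma invNum_eq_J {n : ℕ} (π : Equiv.Perm (Fin n)) : invNum π = J π⁻¹ := by
  apply card_nbij' (fun p : Fin n × Fin n => (π p.2, π p.1)) (fun q => (π⁻¹ q.2, π⁻¹ q.1))
  · intro p hp
    simp only [mem_coe, mem_filter, mem_univ, true_and] at hp ⊢
    exact ⟨hp.2, by simp [hp.1]⟩
  · intro q hq
    simp only [mem_coe, mem_filter, mem_univ, true_and] at hq ⊢
    exact ⟨hq.2, by simp [hq.1]⟩
  · intro p _; simp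
  · intro q _; simp

lemma descent_iff {n : ℕ} (π : Equiv.Perm (Fin n)) {a b : Fin n} (hab : a < b) :
    (invNum (Equiv.swap a b * π) + 1 = invNum π) ↔
    (π⁻¹ b < π⁻¹ a ∧ ∀ c, a < c → c < b → ¬(π⁻¹ b < π⁻¹ c ∧ π⁻¹ c < π⁻¹ a)) := by
  have h1 : invNum (Equiv.swap a b * π) = J (π⁻¹ * Equiv.swap a b) := by
    rw [invNum_eq_J, mul_inv_rev, Equiv.swap_inv]
  rw [invNum_eq_J π, h1]
  have hMempty : ∀ (f : Equiv.Perm (Fin n)),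
      ((univ.filter fun c => a < c ∧ c < b ∧ f b < f c ∧ f c < f a).card = 0 ↔
        ∀ c, a < c → c < b → ¬(f b < f c ∧ f c < f a)) := by
    intro f
    rw [Finset.card_eq_zero, Finset.filter_eq_empty_iff]
    constructor
    · intro hh c h1 h2 h3; exact hh (mem_univ c) ⟨h1, h2, h3.1, h3.2⟩
    · rintro hh c - ⟨h1, h2, h3, h4⟩; exact hh c h1 h2 ⟨h3, h4⟩
  rcases lt_trichotomy (π⁻¹ b) (π⁻¹ a) with hlt | heq | hgt
  · have hk := key π⁻¹ hab hlt
    constructor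
    · intro he
      exact ⟨hlt, (hMempty π⁻¹).mp (by omega)⟩
    · rintro ⟨-, hc⟩
      have := (hMempty π⁻¹).mpr hc
      omega
  · exact absurd (π⁻¹.injective heq) (ne_of_lt hab).symm
  · have hba' : (π⁻¹ * Equiv.swap a b) b < (π⁻¹ * Equiv.swap a b) a := by
      simpa [Equiv.Perm.mul_apply] using hgt
    have hk := key (π⁻¹ * Equiv.swap a b) hab hba'
    have h3 : (π⁻¹ * Equiv.swap a b) * Equiv.swap a b = π⁻¹ := by
      rw [mul_assoc, Equiv.swap_mul_self, mul_one]
    rw [h3] at hk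
    constructor
    · intro he; omega
    · rintro ⟨hba, -⟩; exact absurd hba (asymm hgt)

lemma chain_aux {n : ℕ} (f g : Equiv.Perm (Fin n))
    (h : ∀ a b : Fin n, a < b →
      (f b < f a ∧ ∀ c, a < c → c < b → ¬(f b < f c ∧ f c < f a)) →
      g b < g a) :
    ∀ k : ℕ, ∀ a b : Fin n, a < b → (b : ℕ) - (a : ℕ) ≤ k → f b < f a → g b < g a := by
  intro k
  induction k with
  | zero =>
    intro a b hab hle _
    have := Fin.lt_def.mp hab
    exact absurd hle (by omega)
  | succ k ih =>
    intro a b hab hle hfb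
    by_cases hm : ∀ c, a < c → c < b → ¬(f b < f c ∧ f c < f a)
    · exact h a b hab ⟨hfb, hm⟩
    · push_neg at hm
      obtain ⟨c, hc1, hc2, hc3, hc4⟩ := hm
      have l1 := Fin.lt_def.mp hc1
      have l2 := Fin.lt_def.mp hc2
      have hga := ih a c hc1 (by omega) hc4
      have hgb := ih c b hc2 (by omega) hc3
      exact lt_trans hgb hga

lemma card_lt_val {n : ℕ} (t : Fin n) :
    (univ.filter fun v : Fin n => v < t).card = (t : ℕ) := by
  rw [show (univ.filter fun v : Fin n => v < t) = Finset.Iio t by ext v; simp]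
  exact Fin.card_Iio t

lemma card_perm_lt {n : ℕ} (f : Equiv.Perm (Fin n)) (x : Fin n) :
    (univ.filter fun y : Fin n => f y < f x).card = ((f x : ℕ)) := by
  rw [← card_lt_val (f x)]
  apply card_nbij' (fun y => f y) (fun v => f⁻¹ v)
  · intro y hy; simp_all
  · intro v hv; simp_all
  · intro y _; simp
  · intro v _; simp


/-- The strong descent set determines the permutation. -/
theorem strong_descent_set_determines {n : ℕ} (π σ : Equiv.Perm (Fin n))
    (h : ∀ a b : Fin n, a < b →
      (invNum (Equiv.swap a b * π) + 1 = invNum π ↔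
       invNum (Equiv.swap a b * σ) + 1 = invNum σ)) :
    π = σ := by
  have hdesc : ∀ a b : Fin n, a < b →
      ((π⁻¹ b < π⁻¹ a ∧ ∀ c, a < c → c < b → ¬(π⁻¹ b < π⁻¹ c ∧ π⁻¹ c < π⁻¹ a)) ↔
       (σ⁻¹ b < σ⁻¹ a ∧ ∀ c, a < c → c < b → ¬(σ⁻¹ b < σ⁻¹ c ∧ σ⁻¹ c < σ⁻¹ a))) := by
    intro a b hab
    rw [← descent_iff π hab, ← descent_iff σ hab]
    exact h a b hab
  have hfg : ∀ x y : Fin n, x < y → (π⁻¹ y < π⁻¹ x ↔ σ⁻¹ y < σ⁻¹ x) := by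
    intro x y hxy
    have hb : (y : ℕ) - (x : ℕ) ≤ n := by omega
    constructor
    · exact chain_aux π⁻¹ σ⁻¹ (fun a b hab hd => ((hdesc a b hab).mp hd).1) n x y hxy hb
    · exact chain_aux σ⁻¹ π⁻¹ (fun a b hab hd => ((hdesc a b hab).mpr hd).1) n x y hxy hb
  have hcomp : ∀ y x : Fin n, π⁻¹ y < π⁻¹ x ↔ σ⁻¹ y < σ⁻¹ x := by
    intro y x
    rcases lt_trichotomy x y with hxy | rfl | hyx
    · exact hfg x y hxy
    · simp
    · have hne1 : π⁻¹ y ≠ π⁻¹ x := fun hh => (ne_of_lt hyx) (π⁻¹.injective hh)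
      have hne2 : σ⁻¹ y ≠ σ⁻¹ x := fun hh => (ne_of_lt hyx) (σ⁻¹.injective hh)
      have hiff := hfg y x hyx
      constructor
      · intro hh
        rcases lt_trichotomy (σ⁻¹ y) (σ⁻¹ x) with h' | h' | h'
        · exact h'
        · exact absurd h' hne2
        · exact absurd (hiff.mpr h') (asymm hh)
      · intro hh
        rcases lt_trichotomy (π⁻¹ y) (π⁻¹ x) with h' | h' | h'
        · exact h'
        · exact absurd h' hne1
        · exact absurd (hiff.mp h') (asymm hh)
  have hval : ∀ x : Fin n, π⁻¹ x = σ⁻¹ x := by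
    intro x
    have heq : (univ.filter fun y : Fin n => π⁻¹ y < π⁻¹ x)
        = (univ.filter fun y : Fin n => σ⁻¹ y < σ⁻¹ x) := by
      apply filter_congr
      intro y _
      exact hcomp y x
    have c1 := card_perm_lt π⁻¹ x
    have c2 := card_perm_lt σ⁻¹ x
    rw [heq, c2] at c1
    exact Fin.ext c1.symm
  have hinv : π⁻¹ = σ⁻¹ := Equiv.ext hval
  exact inv_injective hinv
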